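/- The equal-period Bernoulli polynomials satisfy r · B_{r+1,n}(z+1) = (r−n) · B_{r,n}(z) + n·z · B_{r,n−1}(z). -/

import Mathlib

noncomputable section
open Complex BigOperators

/-- `B : ℕ → ℂ → ℂ` is the family of multiple Bernoulli polynomials attached to
periods `ω`, characterized by the generating function
`t^r e^{zt} / ∏ⱼ (e^{ωⱼ t} - 1) = ∑ₙ B n z · tⁿ/n!` for `t` near `0`. -/
def IsMultBernoulli {r : ℕ} (ω : Fin r → ℂ) (B : ℕ → ℂ → ℂ) : Prop :=
  ∃ ε > 0, ∀ (z t : ℂ), t ≠ 0 → ‖t‖ < ε →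
    HasSum (fun n : ℕ => B n z * t ^ n / (n.factorial : ℂ))
      (t ^ r * Complex.exp (z * t) / ∏ j, (Complex.exp (ω j * t) - 1))

open Filter FormalMultilinearSeries Finset
open scoped Topology

/-- membership in the emetric ball from an abs bound. -/
private lemma mem_eball_of_abs_lt {ε : ℝ} {y : ℂ} (hy : ‖y‖ < ε) :
    y ∈ Metric.eball (0 : ℂ) (ENNReal.ofReal ε) := by
  rw [Metric.emetric_ball, Metric.mem_ball, dist_zero_right]
  exact hy

/-- A pointwise-summable coefficient family gives a power series on the ball. -/
private lemma hasFPS_of_summable {a : ℕ → ℂ} {ε : ℝ} (hε : 0 < ε)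
    (h : ∀ t : ℂ, t ≠ 0 → ‖t‖ < ε → Summable (fun n => a n * t ^ n)) :
    HasFPowerSeriesOnBall (fun t => ∑' n, a n * t ^ n) (ofScalars ℂ a) 0
      (ENNReal.ofReal ε) := by
  have hsum : ∀ y : ℂ, ‖y‖ < ε → Summable (fun n => a n * y ^ n) := by
    intro y hy
    rcases eq_or_ne y 0 with rfl | hy0
    · refine (hasSum_single 0 fun n hn => ?_).summable
      simp [zero_pow hn]
    · exact h y hy0 hy
  constructor
  · -- radius bound
    apply ENNReal.le_of_forall_nnreal_lt
    intro s hs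
    have hsε : (s : ℝ) < ε := by
      rwa [← ENNReal.ofReal_coe_nnreal, ENNReal.ofReal_lt_ofReal_iff hε] at hs
    apply FormalMultilinearSeries.le_radius_of_isBigO
    have hsummable : Summable (fun n => a n * ((s : ℝ) : ℂ) ^ n) := by
      apply hsum
      simpa using hsε
    have h0 : Tendsto (fun n => ‖a n * ((s : ℝ) : ℂ) ^ n‖) atTop (𝓝 0) := by
      simpa using hsummable.tendsto_atTop_zero.norm
    have hO : (fun n => ‖a n * ((s : ℝ) : ℂ) ^ n‖) =O[atTop] (fun _ => (1 : ℝ)) :=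
      h0.isBigO_one ℝ
    have hEq : (fun n => ‖(ofScalars ℂ a) n‖ * (s : ℝ) ^ n)
        = fun n => ‖a n * ((s : ℝ) : ℂ) ^ n‖ := by
      funext n
      rw [ofScalars_norm, norm_mul, norm_pow]
      simp [Complex.norm_of_nonneg s.coe_nonneg]
    exact hEq ▸ hO
  · exact ENNReal.ofReal_pos.mpr hε
  · intro y hy
    have hy' : ‖y‖ < ε := by
      rwa [Metric.emetric_ball, Metric.mem_ball, dist_zero_right] at hy
    have := (hsum y hy').hasSum
    simp only [zero_add]
    convert this using 2 with n
    · rfl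
    rw [ofScalars_apply_eq, smul_eq_mul]

/-- Uniqueness of power series coefficients from sums on a punctured disc. -/
private lemma coeff_unique {a b : ℕ → ℂ} {ε : ℝ} (hε : 0 < ε) {S : ℂ → ℂ}
    (ha : ∀ t : ℂ, t ≠ 0 → ‖t‖ < ε → HasSum (fun n => a n * t ^ n) (S t))
    (hb : ∀ t : ℂ, t ≠ 0 → ‖t‖ < ε → HasSum (fun n => b n * t ^ n) (S t)) :
    a = b := by
  have hfa := hasFPS_of_summable hε (fun t ht h' => (ha t ht h').summable)
  have hgb := hasFPS_of_summable hε (fun t ht h' => (hb t ht h').summable)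
  set f : ℂ → ℂ := fun t => ∑' n, a n * t ^ n with hf
  set g : ℂ → ℂ := fun t => ∑' n, b n * t ^ n with hg
  have heq : ∀ t : ℂ, t ≠ 0 → ‖t‖ < ε → f t = g t := by
    intro t ht h'
    rw [hf, hg]
    simp only
    rw [(ha t ht h').tsum_eq, (hb t ht h').tsum_eq]
  have h0 : f 0 = g 0 := by
    have hcf : Tendsto f (𝓝[≠] (0:ℂ)) (𝓝 (f 0)) :=
      (hfa.hasFPowerSeriesAt.analyticAt.continuousAt.tendsto).mono_left nhdsWithin_le_nhds
    have hcg : Tendsto g (𝓝[≠] (0:ℂ)) (𝓝 (g 0)) :=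
      (hgb.hasFPowerSeriesAt.analyticAt.continuousAt.tendsto).mono_left nhdsWithin_le_nhds
    have hev : f =ᶠ[𝓝[≠] (0:ℂ)] g := by
      have hball : Metric.ball (0:ℂ) ε ∈ 𝓝[≠] (0:ℂ) :=
        mem_nhdsWithin_of_mem_nhds (Metric.ball_mem_nhds 0 hε)
      filter_upwards [hball, self_mem_nhdsWithin] with t ht ht0
      exact heq t ht0 (by simpa [dist_zero_right] using ht)
    exact tendsto_nhds_unique (hcf.congr' hev) hcg
  have hfg : Set.EqOn f g (Metric.eball 0 (ENNReal.ofReal ε)) := by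
    intro t ht
    have ht' : ‖t‖ < ε := by
      rwa [Metric.emetric_ball, Metric.mem_ball, dist_zero_right] at ht
    rcases eq_or_ne t 0 with rfl | ht0
    · exact h0
    · exact heq t ht0 ht'
  have hfb : HasFPowerSeriesOnBall f (ofScalars ℂ b) 0 (ENNReal.ofReal ε) := by
    exact hgb.congr hfg.symm
  have := hfa.hasFPowerSeriesAt.eq_formalMultilinearSeries hfb.hasFPowerSeriesAt
  exact (ofScalars_series_eq_iff ℂ a b).mp this

/-- Term-by-term differentiation, in diagonal form. -/
private lemma hasSum_mul_deriv {a : ℕ → ℂ} {ε : ℝ} (hε : 0 < ε)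
    (h : ∀ t : ℂ, t ≠ 0 → ‖t‖ < ε → Summable (fun n => a n * t ^ n))
    {y : ℂ} (hy : ‖y‖ < ε) :
    HasSum (fun n : ℕ => (n : ℂ) * a n * y ^ n)
      (y * deriv (fun t => ∑' n, a n * t ^ n) y) := by
  have hfa := hasFPS_of_summable hε h
  have hder := hfa.fderiv
  have h1 := hder.hasSum (mem_eball_of_abs_lt hy)
  have h2 := (ContinuousLinearMap.apply ℂ ℂ y).hasSum h1
  have h4 : (ContinuousLinearMap.apply ℂ ℂ y)
      (fderiv ℂ (fun t => ∑' n, a n * t ^ n) (0 + y))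
      = y * deriv (fun t => ∑' n, a n * t ^ n) y := by
    rw [zero_add]
    calc (ContinuousLinearMap.apply ℂ ℂ y) (fderiv ℂ (fun t => ∑' n, a n * t ^ n) y)
        = fderiv ℂ (fun t => ∑' n, a n * t ^ n) y (y • 1) := by
          simp [ContinuousLinearMap.apply_apply, smul_eq_mul]
      _ = y • fderiv ℂ (fun t => ∑' n, a n * t ^ n) y 1 :=
          (fderiv ℂ (fun t => ∑' n, a n * t ^ n) y).map_smul y 1
      _ = y * deriv (fun t => ∑' n, a n * t ^ n) y := by
          rw [fderiv_apply_one_eq_deriv, smul_eq_mul]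
  rw [h4] at h2
  have h5 : (fun n : ℕ => (ContinuousLinearMap.apply ℂ ℂ y) ((ofScalars ℂ a).derivSeries n fun _ => y))
      = fun n : ℕ => ((fun m : ℕ => (m : ℂ) * a m * y ^ m) (n + 1)) := by
    funext n
    rw [ContinuousLinearMap.apply_apply, FormalMultilinearSeries.derivSeries_apply_diag,
      ofScalars_apply_eq]
    push_cast [nsmul_eq_mul, smul_eq_mul]
    ring
  rw [h5] at h2
  have h6 := (hasSum_nat_add_iff (f := fun m : ℕ => (m : ℂ) * a m * y ^ m) 1).mp h2
  simpa using h6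

/-- `exp t ≠ 1` for small nonzero `t`. -/
private lemma exp_ne_one_small {t : ℂ} (ht : t ≠ 0) (h : ‖t‖ < 1) :
    Complex.exp t ≠ 1 := by
  intro hexp
  rw [Complex.exp_eq_one_iff] at hexp
  obtain ⟨k, hk⟩ := hexp
  have hk0 : k ≠ 0 := by
    rintro rfl
    simp only [Int.cast_zero, zero_mul] at hk
    exact ht hk
  have habs : ‖t‖ = |(k : ℝ)| * (2 * Real.pi) := by
    rw [hk]
    simp [Complex.norm_intCast, Complex.norm_real, Complex.norm_I,
      abs_of_pos Real.pi_pos]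
  have h1 : (1 : ℝ) ≤ |(k : ℝ)| := by
    rw [← Int.cast_abs]
    exact_mod_cast Int.one_le_abs hk0
  nlinarith [Real.pi_gt_three]


/-- r·B_{r+1,n}(z+1) = (r-n)·B_{r,n}(z) + n·z·B_{r,n-1}(z) for equal periods 1. -/
theorem multBernoulli_equal_period_recursion {r : ℕ} (B B' : ℕ → ℂ → ℂ)
    (hB : IsMultBernoulli (fun _ : Fin r => (1 : ℂ)) B)
    (hB' : IsMultBernoulli (fun _ : Fin (r + 1) => (1 : ℂ)) B')
    (n : ℕ) (hn : 1 ≤ n) (z : ℂ) :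
    (r : ℂ) * B' n (z + 1) = ((r : ℂ) - (n : ℂ)) * B n z + (n : ℂ) * z * B (n - 1) z := by
  obtain ⟨ε₁, hε₁, h1⟩ := hB
  obtain ⟨ε₂, hε₂, h2⟩ := hB'
  set ε : ℝ := min (min ε₁ ε₂) 1 with hεdef
  have hε : 0 < ε := lt_min (lt_min hε₁ hε₂) one_pos
  have hε1 : ε ≤ 1 := min_le_right _ _
  set φ : ℂ → ℂ := fun t => t ^ r * Complex.exp (z * t) / (Complex.exp t - 1) ^ r with hφdef
  set ψ : ℂ → ℂ :=
    fun t => t ^ (r + 1) * Complex.exp ((z + 1) * t) / (Complex.exp t - 1) ^ (r + 1) with hψdef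
  set a : ℕ → ℂ := fun m => B m z / (m.factorial : ℂ) with hadef
  have ha : ∀ t : ℂ, t ≠ 0 → ‖t‖ < ε → HasSum (fun m : ℕ => a m * t ^ m) (φ t) := by
    intro t ht ht'
    have h := h1 z t ht (ht'.trans_le ((min_le_left _ _).trans (min_le_left _ _)))
    simp only [one_mul, Finset.prod_const, Finset.card_univ, Fintype.card_fin] at h
    convert h using 1
    funext m
    rw [hadef]
    ring
  have key : (fun m : ℕ => (r : ℂ) * B' m (z + 1) / (m.factorial : ℂ))
      = fun m : ℕ => (((r : ℂ) - m) * B m z + m * z * B (m - 1) z) / (m.factorial : ℂ) := by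
    apply coeff_unique hε (S := fun t => (r : ℂ) * ψ t)
    · intro t ht ht'
      have h := (h2 (z + 1) t ht
        (ht'.trans_le ((min_le_left _ _).trans (min_le_right _ _)))).mul_left (r : ℂ)
      simp only [one_mul, Finset.prod_const, Finset.card_univ, Fintype.card_fin] at h
      convert h using 1
      · rfl
      funext m
      ring
    · intro t ht ht'
      have hexp : Complex.exp t ≠ 1 := exp_ne_one_small ht (ht'.trans_le hε1)
      have hden0 : (Complex.exp t - 1) ≠ 0 := sub_ne_zero.mpr hexp
      have hA := ha t ht ht'
      have hD := hasSum_mul_deriv hε (fun u hu h' => (ha u hu h').summable) ht'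
      -- the sum equals φ near t, hence has the same derivative
      have hfd : deriv (fun u : ℂ => ∑' m : ℕ, a m * u ^ m) t = deriv φ t := by
        apply Filter.EventuallyEq.deriv_eq
        have hopen : IsOpen {u : ℂ | u ≠ 0 ∧ ‖u‖ < ε} :=
          IsOpen.inter isOpen_ne (isOpen_lt continuous_norm continuous_const)
        filter_upwards [hopen.mem_nhds ⟨ht, ht'⟩] with u hu
        exact (ha u hu.1 hu.2).tsum_eq
      -- explicit derivative of φ
      have hnum : HasDerivAt (fun u : ℂ => u ^ r * Complex.exp (z * u))
          ((r : ℂ) * t ^ (r - 1) * Complex.exp (z * t)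
            + t ^ r * (Complex.exp (z * t) * z)) t := by
        have hh1 : HasDerivAt (fun u : ℂ => u ^ r) ((r : ℂ) * t ^ (r - 1)) t :=
          hasDerivAt_pow r t
        have hh2 : HasDerivAt (fun u : ℂ => Complex.exp (z * u))
            (Complex.exp (z * t) * z) t := by
          simpa using ((hasDerivAt_id t).const_mul z).cexp
        exact hh1.mul hh2
      have hdenD : HasDerivAt (fun u : ℂ => (Complex.exp u - 1) ^ r)
          ((r : ℂ) * (Complex.exp t - 1) ^ (r - 1) * Complex.exp t) t := by
        simpa using ((Complex.hasDerivAt_exp t).sub_const 1).fun_pow r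
      have hφd := hnum.fun_div hdenD (pow_ne_zero r hden0)
      have hkey : t * deriv φ t = (r : ℂ) * φ t + z * t * φ t - (r : ℂ) * ψ t := by
        rw [hφd.deriv, hφdef, hψdef]
        have hsplit : Complex.exp ((z + 1) * t) = Complex.exp (z * t) * Complex.exp t := by
          rw [← Complex.exp_add]; ring_nf
        simp only
        rw [hsplit]
        cases r with
        | zero => simp; ring
        | succ m =>
          rw [Nat.succ_sub_one]
          field_simp
          ring
      -- the z-part
      have hZ : HasSum (fun m : ℕ => ((m : ℂ) * z * B (m - 1) z / (m.factorial : ℂ)) * t ^ m)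
          (z * t * φ t) := by
        have base := hA.mul_left (z * t)
        have h5 : HasSum (fun m : ℕ =>
            ((fun m : ℕ => ((m : ℂ) * z * B (m - 1) z / (m.factorial : ℂ)) * t ^ m) (m + 1)))
            (z * t * φ t) := by
          convert base using 1
          · rfl
          funext m
          simp only [Nat.add_sub_cancel, Nat.factorial_succ, hadef]
          push_cast
          have hm : ((m : ℂ) + 1) ≠ 0 := Nat.cast_add_one_ne_zero m
          have hf : ((m.factorial : ℂ)) ≠ 0 := Nat.cast_ne_zero.mpr m.factorial_ne_zero
          field_simp
          ring
        have h6 := (hasSum_nat_add_iff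
          (f := fun m : ℕ => ((m : ℂ) * z * B (m - 1) z / (m.factorial : ℂ)) * t ^ m) 1).mp h5
        simpa using h6
      -- combine everything
      have hcomb := ((hA.mul_left (r : ℂ)).sub hD).add hZ
      convert hcomb using 1
      · rfl
      · funext m
        simp only [hadef]
        ring
      · rw [hfd, hkey]
        ring
  have hkn := congrFun key n
  have hfact : ((n.factorial : ℂ)) ≠ 0 := Nat.cast_ne_zero.mpr n.factorial_ne_zero
  rw [div_eq_div_iff hfact hfact] at hkn
  exact mul_right_cancel₀ hfact hkn
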